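/- arXiv:2511.03607 — 8 statements merged into one kernel-verified Lean document; each statement's English description precedes it below -/
import Mathlib

section
/- For a sequence (a_n) of pairwise orthogonal self-adjoint elements of a C*-algebra (a_n * a_m = 0 for n ≠ m), the series ∑ a_n converges in norm if and only if ‖a_n‖ → 0. -/
open Filter

private lemma pow_bound {A : Type*} [NonUnitalNormedRing A] [StarRing A] [CStarRing A] :
    ∀ (k : ℕ) (a : ℕ → A) (F : Finset ℕ),
      (∀ n ∈ F, IsSelfAdjoint (a n)) →
      (∀ n ∈ F, ∀ m ∈ F, n ≠ m → a n * a m = 0) →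
      ‖∑ n ∈ F, a n‖ ^ (2 ^ k) ≤ ∑ n ∈ F, ‖a n‖ ^ (2 ^ k) := by
  intro k
  induction k with
  | zero =>
    intro a F _ _
    simpa using norm_sum_le F a
  | succ k ih =>
    intro a F hsa horth
    have hsq : (∑ n ∈ F, a n) * (∑ n ∈ F, a n) = ∑ n ∈ F, a n * a n := by
      rw [Finset.sum_mul_sum]
      refine Finset.sum_congr rfl fun i hi => ?_
      exact Finset.sum_eq_single_of_mem i hi fun j hj hne =>
        horth i hi j hj fun h => hne h.symm
    have hnorm : ‖∑ n ∈ F, a n‖ ^ 2 = ‖∑ n ∈ F, a n * a n‖ := by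
      rw [← hsq]
      have hself : star (∑ n ∈ F, a n) = ∑ n ∈ F, a n := by
        rw [star_sum]
        exact Finset.sum_congr rfl fun n hn => (hsa n hn)
      rw [pow_two, ← CStarRing.norm_star_mul_self (x := ∑ n ∈ F, a n), hself]
    calc ‖∑ n ∈ F, a n‖ ^ (2 ^ (k + 1))
        = (‖∑ n ∈ F, a n‖ ^ 2) ^ (2 ^ k) := by rw [← pow_mul, pow_succ, mul_comm]
      _ = ‖∑ n ∈ F, a n * a n‖ ^ (2 ^ k) := by rw [hnorm]
      _ ≤ ∑ n ∈ F, ‖a n * a n‖ ^ (2 ^ k) := by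
          refine ih (fun n => a n * a n) F (fun n hn => ?_) (fun n hn m hm hne => ?_)
          · have := hsa n hn
            rw [IsSelfAdjoint, star_mul, this]
          · show a n * a n * (a m * a m) = 0
            rw [mul_assoc, ← mul_assoc (a n) (a m) (a m), horth n hn m hm hne, zero_mul, mul_zero]
      _ = ∑ n ∈ F, ‖a n‖ ^ (2 ^ (k + 1)) := by
          refine Finset.sum_congr rfl fun n hn => ?_
          have : ‖a n * a n‖ = ‖a n‖ ^ 2 := by
            rw [pow_two, ← CStarRing.norm_star_mul_self (x := a n), (hsa n hn)]
          rw [this, ← pow_mul, pow_succ, mul_comm]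

private lemma norm_sum_le_of_orth {A : Type*} [NonUnitalNormedRing A] [StarRing A]
    [CStarRing A] (a : ℕ → A) (F : Finset ℕ)
    (hsa : ∀ n ∈ F, IsSelfAdjoint (a n))
    (horth : ∀ n ∈ F, ∀ m ∈ F, n ≠ m → a n * a m = 0)
    (M : ℝ) (hM : 0 ≤ M) (hb : ∀ n ∈ F, ‖a n‖ ≤ M) :
    ‖∑ n ∈ F, a n‖ ≤ M := by
  by_contra h
  push_neg at h
  set s := ∑ n ∈ F, a n with hs_def
  have hs : 0 < ‖s‖ := lt_of_le_of_lt hM h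
  rcases eq_or_lt_of_le hM with hM0 | hM0
  · have h0 := pow_bound 0 a F hsa horth
    simp only [pow_zero, pow_one] at h0
    have : ∑ n ∈ F, ‖a n‖ ≤ 0 :=
      Finset.sum_nonpos fun n hn => (hb n hn).trans (le_of_eq hM0.symm)
    have := h0.trans this
    linarith
  · have hr : 1 < ‖s‖ / M := (one_lt_div hM0).2 h
    obtain ⟨k, hk⟩ := pow_unbounded_of_one_lt (F.card : ℝ) hr
    have hk2 : (F.card : ℝ) < (‖s‖ / M) ^ (2 ^ k) :=
      hk.trans_le (pow_le_pow_right₀ hr.le (Nat.lt_two_pow_self (n := k)).le)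
    have hb2 : ‖s‖ ^ (2 ^ k) ≤ (F.card : ℝ) * M ^ (2 ^ k) := by
      refine (pow_bound k a F hsa horth).trans ?_
      calc ∑ n ∈ F, ‖a n‖ ^ (2 ^ k) ≤ F.card • (M ^ (2 ^ k)) :=
            Finset.sum_le_card_nsmul F _ _ fun n hn =>
              pow_le_pow_left₀ (norm_nonneg _) (hb n hn) _
        _ = (F.card : ℝ) * M ^ (2 ^ k) := by rw [nsmul_eq_mul]
    have hMk : 0 < M ^ (2 ^ k) := pow_pos hM0 _
    have : (‖s‖ / M) ^ (2 ^ k) ≤ (F.card : ℝ) := by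
      rw [div_pow, div_le_iff₀ hMk]
      exact hb2
    linarith

theorem stmt_3 {A : Type*} [NonUnitalNormedRing A] [StarRing A] [CStarRing A]
    [CompleteSpace A] (a : ℕ → A) (hsa : ∀ n, IsSelfAdjoint (a n))
    (horth : ∀ n m, n ≠ m → a n * a m = 0) :
    (∃ s : A, Tendsto (fun N => ∑ n ∈ Finset.range N, a n) atTop (nhds s)) ↔
      Tendsto (fun n => ‖a n‖) atTop (nhds 0) := by
  constructor
  · rintro ⟨s, hs⟩
    have h1 : Tendsto (fun N => ∑ n ∈ Finset.range (N + 1), a n) atTop (nhds s) :=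
      hs.comp (tendsto_add_atTop_nat 1)
    have h2 : Tendsto (fun N => a N) atTop (nhds (s - s)) := by
      have := h1.sub hs
      refine this.congr fun N => ?_
      rw [Finset.sum_range_succ]
      abel
    rw [sub_self] at h2
    simpa using h2.norm
  · intro h
    have hcauchy : CauchySeq (fun N => ∑ n ∈ Finset.range N, a n) := by
      rw [Metric.cauchySeq_iff]
      intro ε hε
      obtain ⟨N, hN⟩ := (Metric.tendsto_atTop.mp h) (ε / 2) (by linarith)
      refine ⟨N, fun p hp q hq => ?_⟩
      wlog hqp : q ≤ p generalizing p q
      · rw [dist_comm]; exact this q hq p hp (le_of_not_ge hqp)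
      rw [dist_eq_norm, ← Finset.sum_Ico_eq_sub _ hqp]
      have : ‖∑ n ∈ Finset.Ico q p, a n‖ ≤ ε / 2 := by
        refine norm_sum_le_of_orth a _ (fun n _ => hsa n)
          (fun n _ m _ hne => horth n m hne) (ε / 2) (by linarith) fun n hn => ?_
        have hn' : N ≤ n := le_trans hq (Finset.mem_Ico.mp hn).1
        have := hN n hn'
        rw [Real.dist_eq, sub_zero] at this
        calc ‖a n‖ ≤ |‖a n‖| := le_abs_self _
          _ ≤ ε / 2 := this.le
      linarith
    exact cauchySeq_tendsto_of_complete hcauchy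
end

section
/- For every bounded sequence x ∈ ℓ∞(ℕ, ℂ), the distance from x to the subspace c₀ of sequences converging to 0 equals limsup_n |x n|. Equivalently, the quotient norm of the image of x in ℓ∞/c₀ is limsup_n |x n|. -/
open Filter

theorem stmt_4 (x : lp (fun _ : ℕ => ℂ) ⊤) :
    Metric.infDist x
      {y : lp (fun _ : ℕ => ℂ) ⊤ | Tendsto (fun n => y n) atTop (nhds 0)} =
    limsup (fun n => ‖x n‖) atTop := by
  set S := {y : lp (fun _ : ℕ => ℂ) ⊤ | Tendsto (fun n => y n) atTop (nhds 0)} with hS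
  have hS0 : (0 : lp (fun _ : ℕ => ℂ) ⊤) ∈ S := by
    have h0 : (fun n => ((0 : lp (fun _ : ℕ => ℂ) ⊤) : ∀ _ : ℕ, ℂ) n) = fun _ : ℕ => (0 : ℂ) :=
      rfl
    show Tendsto _ atTop (nhds 0)
    rw [h0]
    exact tendsto_const_nhds
  have hbound : ∀ n, ‖x n‖ ≤ ‖x‖ := fun n => by
    exact lp.norm_apply_le_norm ENNReal.top_ne_zero x n
  have hbdd : IsBoundedUnder (· ≤ ·) atTop (fun n => ‖x n‖) :=
    isBoundedUnder_of ⟨‖x‖, hbound⟩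
  have hcobdd : IsCoboundedUnder (· ≥ ·) atTop (fun n => ‖x n‖) :=
    isCoboundedUnder_ge_of_eventually_le atTop (Eventually.of_forall hbound)
  set L := limsup (fun n => ‖x n‖) atTop with hL
  have hL0 : 0 ≤ L :=
    le_limsup_of_frequently_le (Frequently.of_forall fun n => norm_nonneg _) hbdd
  apply le_antisymm
  · -- infDist ≤ L
    refine le_of_forall_pos_le_add fun ε hε => ?_
    have hev : ∀ᶠ n in atTop, ‖x n‖ < L + ε :=
      eventually_lt_of_limsup_lt (by linarith) hbdd
    obtain ⟨N, hN⟩ := eventually_atTop.1 hev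
    have hmem : Memℓp (fun n => if n < N then x n else 0) ⊤ := by
      apply memℓp_infty
      refine ⟨‖x‖, ?_⟩
      rintro r ⟨n, rfl⟩
      by_cases h : n < N
      · show ‖if n < N then x n else 0‖ ≤ ‖x‖
        rw [if_pos h]
        exact hbound n
      · show ‖if n < N then x n else 0‖ ≤ ‖x‖
        rw [if_neg h, norm_zero]
        exact norm_nonneg x
    let y : lp (fun _ : ℕ => ℂ) ⊤ := ⟨_, hmem⟩
    have hyapp : ∀ n, (y : ∀ _ : ℕ, ℂ) n = if n < N then x n else 0 := fun _ => rfl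
    have hyS : y ∈ S := by
      have hev0 : ∀ᶠ n in atTop, (y : ∀ _ : ℕ, ℂ) n = 0 := by
        filter_upwards [eventually_ge_atTop N] with n hn
        exact if_neg (Nat.not_lt.2 hn)
      exact tendsto_const_nhds.congr' (EventuallyEq.symm hev0)
    have hdist : dist x y ≤ L + ε := by
      rw [dist_eq_norm]
      refine lp.norm_le_of_forall_le (by linarith) fun n => ?_
      have hxy : ((x - y) : lp (fun _ : ℕ => ℂ) ⊤) n = x n - y n := by
        simp only [lp.coeFn_sub, Pi.sub_apply]
      rw [hxy, hyapp n]
      by_cases h : n < N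
      · rw [if_pos h, sub_self, norm_zero]; linarith
      · rw [if_neg h, sub_zero]
        have := hN n (Nat.not_lt.1 h)
        linarith
    calc Metric.infDist x S ≤ dist x y := Metric.infDist_le_dist_of_mem hyS
    _ ≤ L + ε := hdist
  · -- L ≤ infDist
    by_contra hcon
    push_neg at hcon
    obtain ⟨y, hyS, hlt⟩ := (Metric.infDist_lt_iff ⟨0, hS0⟩).1 hcon
    have hkey : L ≤ dist x y := by
      refine le_of_forall_pos_le_add fun ε hε => ?_
      have hy0 : ∀ᶠ n in atTop, ‖y n‖ < ε := by
        have ht : Tendsto (fun n => y n) atTop (nhds 0) := hyS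
        have htn := ht.norm
        simp only [norm_zero] at htn
        filter_upwards [htn.eventually (gt_mem_nhds hε)] with n hn
        simpa using hn
      refine limsup_le_of_le (isCoboundedUnder_le_of_le atTop fun n => norm_nonneg _) ?_
      filter_upwards [hy0] with n hn
      have h1 : ‖x n‖ ≤ ‖x n - y n‖ + ‖y n‖ := by
        have h2 := norm_add_le (x n - y n) (y n)
        rw [sub_add_cancel] at h2
        exact h2
      have h3 : ‖x n - y n‖ ≤ dist x y := by
        rw [dist_eq_norm]
        have hxy : ((x - y) : lp (fun _ : ℕ => ℂ) ⊤) n = x n - y n := by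
          simp only [lp.coeFn_sub, Pi.sub_apply]
        calc ‖x n - y n‖ = ‖((x - y) : lp (fun _ : ℕ => ℂ) ⊤) n‖ := by
              rw [hxy]
        _ ≤ _ := lp.norm_apply_le_norm ENNReal.top_ne_zero _ n
      linarith
    exact absurd hkey (not_le.2 hlt)
end

section
/- Let I be an ideal of subsets of ℕ (closed under subsets and finite unions) containing all finite sets, and suppose I has the selection property: for every strictly increasing function f : ℕ → ℕ with f 0 = 0 there exists an infinite L ⊆ ℕ with ⋃_{n ∈ L} [f n, f (n+1)) ∈ I. Then I is tall (dense): every infinite S ⊆ ℕ contains an infinite subset belonging to I. -/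
theorem stmt_6 (I : Set (Set ℕ))
    (hsubset : ∀ S T : Set ℕ, S ⊆ T → T ∈ I → S ∈ I)
    (hunion : ∀ S T : Set ℕ, S ∈ I → T ∈ I → S ∪ T ∈ I)
    (hfin : ∀ S : Set ℕ, S.Finite → S ∈ I)
    (hsel : ∀ f : ℕ → ℕ, StrictMono f → f 0 = 0 →
      ∃ L : Set ℕ, L.Infinite ∧ (⋃ n ∈ L, Set.Ico (f n) (f (n + 1))) ∈ I) :
    ∀ S : Set ℕ, S.Infinite → ∃ T : Set ℕ, T ⊆ S ∧ T.Infinite ∧ T ∈ I := by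
  intro S hS
  have hS' : (setOf (· ∈ S)).Infinite := by exact hS
  set g : ℕ → ℕ := Nat.nth (· ∈ S) with hg
  have hgmono : StrictMono g := Nat.nth_strictMono hS'
  have hgmem : ∀ n, g n ∈ S := fun n => Nat.nth_mem_of_infinite hS' n
  set f : ℕ → ℕ := fun n => match n with | 0 => 0 | n + 1 => g n + 1 with hf
  have hfmono : StrictMono f := by
    apply strictMono_nat_of_lt_succ
    intro n
    match n with
    | 0 => exact Nat.succ_pos _
    | n + 1 => exact Nat.succ_lt_succ (hgmono (Nat.lt_succ_self n))
  obtain ⟨L, hLinf, hLI⟩ := hsel f hfmono rfl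
  refine ⟨g '' L, ?_, ?_, ?_⟩
  · rintro x ⟨n, _, rfl⟩; exact hgmem n
  · exact hLinf.image (hgmono.injective.injOn)
  · apply hsubset _ _ _ hLI
    rintro x ⟨n, hn, rfl⟩
    refine Set.mem_biUnion hn ?_
    constructor
    · match n with
      | 0 => exact Nat.zero_le _
      | n + 1 => exact hgmono (Nat.lt_succ_self n)
    · exact Nat.lt_succ_self _
end

section
/- Every proper ideal on ℕ that contains all finite sets and has the Baire property, when viewed as a subset of the Cantor space 2^ℕ (identifying sets with their characteristic functions), is meagre. -/
/-- xor with a fixed pattern, as a homeomorphism of Cantor space. -/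
def xorHomeo (d : ℕ → Bool) : (ℕ → Bool) ≃ₜ (ℕ → Bool) where
  toFun x := fun n => xor (x n) (d n)
  invFun x := fun n => xor (x n) (d n)
  left_inv x := by funext n; simp [Bool.xor_assoc]
  right_inv x := by funext n; simp [Bool.xor_assoc]
  continuous_toFun := continuous_pi fun n =>
    (continuous_of_discreteTopology (f := fun b : Bool => xor b (d n))).comp
      (continuous_apply n)
  continuous_invFun := continuous_pi fun n =>
    (continuous_of_discreteTopology (f := fun b : Bool => xor b (d n))).comp
      (continuous_apply n)

theorem stmt_7 (I : Set (Set ℕ))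
    (hsubset : ∀ S T : Set ℕ, S ⊆ T → T ∈ I → S ∈ I)
    (hunion : ∀ S T : Set ℕ, S ∈ I → T ∈ I → S ∪ T ∈ I)
    (hfin : ∀ S : Set ℕ, S.Finite → S ∈ I)
    (hproper : Set.univ ∉ I)
    (hBP : BaireMeasurableSet {x : ℕ → Bool | {n | x n = true} ∈ I}) :
    IsMeagre {x : ℕ → Bool | {n | x n = true} ∈ I} := by
  set A : Set (ℕ → Bool) := {x : ℕ → Bool | {n | x n = true} ∈ I} with hA
  -- A is invariant under finite modifications
  have hInv : ∀ x y : ℕ → Bool, {n | x n ≠ y n}.Finite → x ∈ A → y ∈ A := by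
    intro x y hfinxy hx
    refine hsubset _ ({n | x n = true} ∪ {n | x n ≠ y n}) ?_
      (hunion _ _ hx (hfin _ hfinxy))
    intro n hn
    by_cases h : x n = y n
    · exact Or.inl (by simp only [Set.mem_setOf_eq] at hn ⊢; rw [h]; exact hn)
    · exact Or.inr h
  obtain ⟨U, hUopen, hAU⟩ := hBP.residualEq_isOpen
  by_contra hnm
  -- U is nonempty
  have hUne : U.Nonempty := by
    rcases Set.eq_empty_or_nonempty U with h | h
    · subst h
      exact (hnm (Filter.mem_of_superset (Filter.eventuallyEq_set.mp hAU)
        (by intro x hx; simpa using hx))).elim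
    · exact h
  obtain ⟨f, hf⟩ := hUne
  obtain ⟨F, u, hFu, hpi⟩ := (isOpen_pi_iff.mp hUopen) f hf
  -- the cylinder determined by f on F sits inside U
  have hcyl : {x : ℕ → Bool | ∀ n ∈ F, x n = f n} ⊆ U := by
    intro x hx
    apply hpi
    intro n hn
    rw [hx n hn]
    exact (hFu n hn).2
  -- U \ A is meagre
  have hUA : IsMeagre (U \ A) :=
    Filter.mem_of_superset (Filter.eventuallyEq_set.mp hAU)
      (by intro x hx hxd; exact hxd.2 (hx.mpr hxd.1))
  -- A is comeagre
  have hres : A ∈ residual (ℕ → Bool) := by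
    have : IsMeagre Aᶜ := by
      have key : Aᶜ ⊆ ⋃ g : {n // n ∈ F} → Bool,
          (xorHomeo fun n => if h : n ∈ F then g ⟨n, h⟩ else false) ⁻¹' (U \ A) := by
        intro x hx
        refine Set.mem_iUnion.mpr ⟨fun n => xor (x n.1) (f n.1), ?_⟩
        set d : ℕ → Bool := fun n =>
          if h : n ∈ F then xor (x n) (f n) else false with hd
        have hxd : ∀ n, xor (x n) (d n) = if n ∈ F then f n else x n := by
          intro n
          by_cases h : n ∈ F <;> simp [hd, h, Bool.xor_assoc]
        constructor
        · apply hcyl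
          intro n hn
          show xor (x n) (d n) = f n
          rw [hxd n, if_pos hn]
        · intro hmem
          apply hx
          refine hInv _ _ ?_ hmem
          apply Set.Finite.subset F.finite_toSet
          intro n hn
          by_contra h
          exact hn (show (x n ^^ d n) = x n by rw [hxd n, if_neg (fun hF => h (Finset.mem_coe.mpr hF))])
      refine Filter.mem_of_superset ?_ (Set.compl_subset_compl.mpr key)
      rw [Set.compl_iUnion]
      refine (countable_iInter_mem).mpr fun g => ?_
      exact hUA.preimage_of_isOpenMap (xorHomeo _).continuous
        (xorHomeo _).isOpenMap
    rwa [IsMeagre, compl_compl] at this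
  -- the complement homeomorphism
  have hcres : (xorHomeo fun _ => true) ⁻¹' A ∈ residual (ℕ → Bool) := by
    have : IsMeagre ((xorHomeo fun _ => true) ⁻¹' Aᶜ) :=
      IsMeagre.preimage_of_isOpenMap (xorHomeo _).continuous (xorHomeo _).isOpenMap
        (show IsMeagre Aᶜ by rw [IsMeagre, compl_compl]; exact hres)
    simpa [IsMeagre] using this
  obtain ⟨x, hx1, hx2⟩ :=
    (dense_of_mem_residual (Filter.inter_mem hres hcres)).nonempty
  apply hproper
  have h2 : {n | (x n ^^ true) = true} ∈ I := hx2
  refine hsubset _ ({n | x n = true} ∪ {n | (x n ^^ true) = true}) ?_ (hunion _ _ hx1 h2)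
  intro n _
  by_cases h : x n = true
  · exact Or.inl h
  · exact Or.inr (show (x n ^^ true) = true by
      simp only [Bool.not_eq_true] at h; simp [h])
end

section
/- If an ideal I on ℕ containing all finite sets is nonmeagre as a subset of the Cantor space 2^ℕ, then for every strictly increasing f : ℕ → ℕ with f 0 = 0 there is an infinite L ⊆ ℕ such that ⋃_{n ∈ L} [f n, f (n+1)) ∈ I. -/
theorem stmt_8 (I : Set (Set ℕ))
    (hsubset : ∀ S T : Set ℕ, S ⊆ T → T ∈ I → S ∈ I)
    (hunion : ∀ S T : Set ℕ, S ∈ I → T ∈ I → S ∪ T ∈ I)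
    (hfin : ∀ S : Set ℕ, S.Finite → S ∈ I)
    (hnonmeagre : ¬ IsMeagre {x : ℕ → Bool | {n | x n = true} ∈ I}) :
    ∀ f : ℕ → ℕ, StrictMono f → f 0 = 0 →
      ∃ L : Set ℕ, L.Infinite ∧ (⋃ n ∈ L, Set.Ico (f n) (f (n + 1))) ∈ I := by
  intro f hf hf0
  by_contra hcon
  push_neg at hcon
  apply hnonmeagre
  -- the family of closed nowhere dense sets
  set F : ℕ → Set (ℕ → Bool) :=
    fun k => {x | ∀ n ≥ k, ∃ m ∈ Set.Ico (f n) (f (n + 1)), x m = false} with hF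
  -- each F k is closed
  have hclosed : ∀ k, IsClosed (F k) := by
    intro k
    have : F k = ⋂ n ∈ {n | n ≥ k}, ⋃ m ∈ Set.Ico (f n) (f (n + 1)), {x : ℕ → Bool | x m = false} := by
      ext x; simp [hF]
    rw [this]
    refine isClosed_biInter fun n _ => ?_
    have hfin' : (Set.Ico (f n) (f (n + 1))).Finite := Set.finite_Ico _ _
    refine Set.Finite.isClosed_biUnion hfin' fun m _ => ?_
    exact isClosed_eq (continuous_apply m) continuous_const
  -- each F k has empty interior
  have hint : ∀ k, interior (F k) = ∅ := by
    intro k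
    by_contra h
    obtain ⟨x, hx⟩ := Set.nonempty_iff_ne_empty.2 h
    have hnhds : interior (F k) ∈ nhds x := isOpen_interior.mem_nhds hx
    rw [nhds_pi] at hnhds
    obtain ⟨J, hJfin, t, ht, hsub⟩ := Filter.mem_pi.1 hnhds
    obtain ⟨N, hN⟩ := hJfin.bddAbove
    -- choose n ≥ k with f n > N
    set n := max k (N + 1) with hn
    have hnk : n ≥ k := le_max_left _ _
    have hfn : N < f n :=
      lt_of_lt_of_le (Nat.lt_succ_self N) ((le_max_right k (N + 1)).trans hf.le_apply)
    set y : ℕ → Bool := fun m => if f n ≤ m ∧ m < f (n + 1) then true else x m with hy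
    have hyJ : y ∈ J.pi t := by
      intro j hj
      have hjN : j ≤ N := hN hj
      have : ¬ (f n ≤ j ∧ j < f (n + 1)) := fun ⟨h1, _⟩ => absurd (h1.trans hjN) (not_le.2 hfn)
      have hyj : y j = x j := by simp [hy, this]
      rw [hyj]
      have := ht j
      simpa [nhds_discrete, Filter.mem_pure] using this
    have hyF : y ∈ F k := interior_subset (hsub hyJ)
    obtain ⟨m, hm, hmf⟩ := hyF n hnk
    have : y m = true := by simp [hy, hm.1, hm.2]
    rw [this] at hmf
    simp at hmf
  -- covering
  have hcover : {x : ℕ → Bool | {n | x n = true} ∈ I} ⊆ ⋃ k, F k := by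
    intro x hx
    set L : Set ℕ := {n | Set.Ico (f n) (f (n + 1)) ⊆ {n | x n = true}} with hL
    have hLI : (⋃ n ∈ L, Set.Ico (f n) (f (n + 1))) ∈ I := by
      refine hsubset _ _ ?_ hx
      exact Set.iUnion₂_subset fun n hn => hn
    have hLfin : L.Finite := Set.not_infinite.1 fun hinf => hcon L hinf hLI
    obtain ⟨N, hN⟩ := hLfin.bddAbove
    refine Set.mem_iUnion.2 ⟨N + 1, fun n hn => ?_⟩
    have hnL : n ∉ L := fun h => absurd (hN h) (not_le.2 hn)
    rw [hL, Set.mem_setOf_eq, Set.not_subset] at hnL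
    obtain ⟨m, hm, hmx⟩ := hnL
    exact ⟨m, hm, by simpa using hmx⟩
  rw [isMeagre_iff_countable_union_isNowhereDense]
  refine ⟨Set.range F, ?_, Set.countable_range F, by rwa [Set.sUnion_range]⟩
  rintro t ⟨k, rfl⟩
  exact ((hclosed k).isNowhereDense_iff).2 (hint k)
end

section
/- Let (f_i)_{i ∈ ℕ} be a countable family of strictly increasing functions ℕ → ℕ with f_i 0 = 0 (encoding partitions of ℕ into consecutive finite intervals [f_i n, f_i (n+1))). Then there exists a strictly increasing g : ℕ → ℕ with g 0 = 0 such that for every i and every sufficiently large k, the interval [g k, g (k+1)) contains some interval [f_i n, f_i (n+1)) entirely. -/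
theorem stmt_13 (f : ℕ → ℕ → ℕ) (hmono : ∀ i, StrictMono (f i))
    (h0 : ∀ i, f i 0 = 0) :
    ∃ g : ℕ → ℕ, StrictMono g ∧ g 0 = 0 ∧
      ∀ i, ∃ K, ∀ k ≥ K, ∃ n,
        Set.Ico (f i n) (f i (n + 1)) ⊆ Set.Ico (g k) (g (k + 1)) := by
  let g : ℕ → ℕ := fun k => Nat.rec 0
    (fun k gk => max (gk + 1) ((Finset.range (k + 1)).sup (fun i => f i (gk + 1)))) k
  have hg : ∀ k, g (k + 1) = max (g k + 1)
      ((Finset.range (k + 1)).sup (fun i => f i (g k + 1))) := fun k => rfl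
  have hmonog : StrictMono g := strictMono_nat_of_lt_succ fun k => by
    rw [hg]; exact lt_of_lt_of_le (Nat.lt_succ_self _) (le_max_left _ _)
  refine ⟨g, hmonog, rfl, fun i => ⟨i, fun k hk => ⟨g k, fun x hx => ?_⟩⟩⟩
  obtain ⟨hx1, hx2⟩ := hx
  constructor
  · exact le_trans ((hmono i).le_apply) hx1
  · refine lt_of_lt_of_le hx2 ?_
    rw [hg]
    exact le_trans (Finset.le_sup (f := fun j => f j (g k + 1)) (Finset.mem_range.mpr (Nat.lt_succ_of_le hk)))
      (le_max_right _ _)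
end

section
/- Let I₀ and I₁ be ideals on ℕ containing all finite sets, each with the property that for every infinite S ⊆ ℕ and every partition of S into infinitely many nonempty finite pieces (P_n), there is an infinite L with ⋃_{n∈L} P_n ∈ I_j. Then the ideal I = {S ⊆ ℕ : S ∩ 2ℕ ∈ I₀ and S ∩ (2ℕ+1) ∈ I₁} also has this property (where 2ℕ denotes the even numbers). -/
/-- The combinatorial form of being "everywhere nonmeagre": for every infinite `S ⊆ ℕ`
and every partition of `S` into infinitely many pairwise disjoint nonempty finite pieces,
there is an infinite set of indices whose corresponding union of pieces lies in the ideal. -/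
def EverywhereSelective (I : Set (Set ℕ)) : Prop :=
  ∀ S : Set ℕ, S.Infinite →
    ∀ P : ℕ → Set ℕ, (∀ n, (P n).Finite) → (∀ n, (P n).Nonempty) →
      (Pairwise fun n m => Disjoint (P n) (P m)) → (⋃ n, P n) = S →
        ∃ L : Set ℕ, L.Infinite ∧ (⋃ n ∈ L, P n) ∈ I

/-- One-sided selection: given finite pairwise-disjoint (possibly empty) pieces `Q` and an
infinite index set `M`, there is an infinite `L ⊆ M` with `⋃ n ∈ L, Q n` in the ideal. -/
lemma everywhereSelective_aux (J : Set (Set ℕ))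
    (hsub : ∀ S T : Set ℕ, S ⊆ T → T ∈ J → S ∈ J)
    (hfin : ∀ S : Set ℕ, S.Finite → S ∈ J)
    (hJ : EverywhereSelective J)
    (Q : ℕ → Set ℕ) (hQfin : ∀ n, (Q n).Finite)
    (hQdisj : Pairwise fun n m => Disjoint (Q n) (Q m))
    (M : Set ℕ) (hM : M.Infinite) :
    ∃ L : Set ℕ, L ⊆ M ∧ L.Infinite ∧ (⋃ n ∈ L, Q n) ∈ J := by
  classical
  set A : Set ℕ := {n ∈ M | (Q n).Nonempty} with hA_def
  by_cases hA : A.Infinite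
  · -- enumerate A
    haveI : Infinite A := hA.to_subtype
    let f : ℕ ↪o ℕ := Nat.orderEmbeddingOfSet A
    have hfr : Set.range f = A := Nat.orderEmbeddingOfSet_range A
    have hfA : ∀ k, f k ∈ A := fun k => hfr ▸ Set.mem_range_self k
    set P' : ℕ → Set ℕ := fun k => Q (f k) with hP'
    have hP'fin : ∀ k, (P' k).Finite := fun k => hQfin _
    have hP'ne : ∀ k, (P' k).Nonempty := fun k => (hfA k).2
    have hP'disj : Pairwise fun n m => Disjoint (P' n) (P' m) := by
      intro n m hnm
      exact hQdisj (fun h => hnm (f.injective h))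
    set T : Set ℕ := ⋃ k, P' k with hT
    have hTinf : T.Infinite := by
      -- choose a point in each piece
      have hchoice : ∀ k, ∃ x, x ∈ P' k := fun k => hP'ne k
      choose x hx using hchoice
      have hxinj : Function.Injective x := by
        intro a b hab
        by_contra hne
        exact (hP'disj hne).ne_of_mem (hx a) (hx b) hab
      have : (Set.range x).Infinite := Set.infinite_range_of_injective hxinj
      exact this.mono (by rintro _ ⟨k, rfl⟩; exact Set.mem_iUnion.2 ⟨k, hx k⟩)
    obtain ⟨L', hL'inf, hL'J⟩ := hJ T hTinf P' hP'fin hP'ne hP'disj rfl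
    refine ⟨f '' L', ?_, ?_, ?_⟩
    · rintro _ ⟨k, _, rfl⟩; exact (hfA k).1
    · exact hL'inf.image (f.injective.injOn)
    · have : (⋃ n ∈ f '' L', Q n) = ⋃ k ∈ L', P' k := by
        ext y
        simp only [Set.mem_iUnion, exists_prop, Set.mem_image]
        constructor
        · rintro ⟨_, ⟨k, hk, rfl⟩, hy⟩; exact ⟨k, hk, hy⟩
        · rintro ⟨k, hk, hy⟩; exact ⟨f k, ⟨k, hk, rfl⟩, hy⟩
      rw [this]; exact hL'J
  · -- A finite: take L = M \ A, union is empty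
    rw [Set.not_infinite] at hA
    refine ⟨M \ A, Set.diff_subset, hM.diff hA, ?_⟩
    have : (⋃ n ∈ M \ A, Q n) = ∅ := by
      apply Set.eq_empty_iff_forall_notMem.2
      intro y hy
      obtain ⟨n, hn, hyn⟩ := Set.mem_iUnion₂.1 hy
      exact hn.2 ⟨hn.1, ⟨y, hyn⟩⟩
    rw [this]; exact hfin _ (Set.finite_empty)

theorem stmt_18 (I₀ I₁ : Set (Set ℕ))
    (hsubset₀ : ∀ S T : Set ℕ, S ⊆ T → T ∈ I₀ → S ∈ I₀)
    (hunion₀ : ∀ S T : Set ℕ, S ∈ I₀ → T ∈ I₀ → S ∪ T ∈ I₀)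
    (hfin₀ : ∀ S : Set ℕ, S.Finite → S ∈ I₀)
    (hsubset₁ : ∀ S T : Set ℕ, S ⊆ T → T ∈ I₁ → S ∈ I₁)
    (hunion₁ : ∀ S T : Set ℕ, S ∈ I₁ → T ∈ I₁ → S ∪ T ∈ I₁)
    (hfin₁ : ∀ S : Set ℕ, S.Finite → S ∈ I₁)
    (h₀ : EverywhereSelective I₀) (h₁ : EverywhereSelective I₁) :
    EverywhereSelective
      {S : Set ℕ | S ∩ {n | Even n} ∈ I₀ ∧ S ∩ {n | Odd n} ∈ I₁} := by
  intro S hS P hPfin hPne hPdisj hPU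
  -- even pieces
  set Q₀ : ℕ → Set ℕ := fun n => P n ∩ {n | Even n} with hQ₀
  set Q₁ : ℕ → Set ℕ := fun n => P n ∩ {n | Odd n} with hQ₁
  have hQ₀fin : ∀ n, (Q₀ n).Finite := fun n => (hPfin n).inter_of_left _
  have hQ₁fin : ∀ n, (Q₁ n).Finite := fun n => (hPfin n).inter_of_left _
  have hQ₀disj : Pairwise fun n m => Disjoint (Q₀ n) (Q₀ m) := fun n m h =>
    (hPdisj h).mono Set.inter_subset_left Set.inter_subset_left
  have hQ₁disj : Pairwise fun n m => Disjoint (Q₁ n) (Q₁ m) := fun n m h =>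
    (hPdisj h).mono Set.inter_subset_left Set.inter_subset_left
  obtain ⟨L₀, -, hL₀inf, hL₀J⟩ := everywhereSelective_aux I₀ hsubset₀ hfin₀ h₀ Q₀ hQ₀fin hQ₀disj
    Set.univ Set.infinite_univ
  obtain ⟨L, hLsub, hLinf, hLJ⟩ := everywhereSelective_aux I₁ hsubset₁ hfin₁ h₁ Q₁ hQ₁fin hQ₁disj
    L₀ hL₀inf
  refine ⟨L, hLinf, ?_, ?_⟩
  · apply hsubset₀ _ (⋃ n ∈ L₀, Q₀ n) _ hL₀J
    intro y hy
    obtain ⟨n, hn, hyn⟩ := Set.mem_iUnion₂.1 hy.1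
    exact Set.mem_iUnion₂.2 ⟨n, hLsub hn, hyn, hy.2⟩
  · apply hsubset₁ _ (⋃ n ∈ L, Q₁ n) _ hLJ
    intro y hy
    obtain ⟨n, hn, hyn⟩ := Set.mem_iUnion₂.1 hy.1
    exact Set.mem_iUnion₂.2 ⟨n, hn, hyn, hy.2⟩
end

section
/- Let (a_n) be a sequence of pairwise orthogonal self-adjoint elements of a C*-algebra with ‖a_n‖ → 0. Then the series ∑ a_n converges in norm and ‖∑_{n ≥ N} a_n‖ = sup_{n ≥ N} ‖a_n‖ for every N; in particular ‖∑ a_n‖ = sup_n ‖a_n‖. -/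
open Filter

lemma aux_le_sum_norm {A : Type*} [NonUnitalNormedRing A] [StarRing A] [CStarRing A]
    (s : Finset ℕ) (a : ℕ → A) (hsa : ∀ i ∈ s, IsSelfAdjoint (a i))
    (horth : ∀ i ∈ s, ∀ j ∈ s, i ≠ j → a i * a j = 0)
    {i : ℕ} (hi : i ∈ s) : ‖a i‖ ≤ ‖∑ j ∈ s, a j‖ := by
  have hmul : a i * ∑ j ∈ s, a j = a i * a i := by
    rw [Finset.mul_sum]
    exact Finset.sum_eq_single i (fun j hj hne => horth i hi j hj (Ne.symm hne)) (fun h => absurd hi h)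
  have h2 : ‖a i‖ * ‖a i‖ = ‖a i * a i‖ := by
    nth_rewrite 3 [← (hsa i hi).star_eq]
    rw [CStarRing.norm_star_mul_self]
  rcases eq_or_lt_of_le (norm_nonneg (a i)) with h0 | h0
  · rw [← h0]; exact norm_nonneg _
  · have := calc ‖a i‖ * ‖a i‖ = ‖a i * a i‖ := h2
      _ = ‖a i * ∑ j ∈ s, a j‖ := by rw [hmul]
      _ ≤ ‖a i‖ * ‖∑ j ∈ s, a j‖ := norm_mul_le _ _
    exact le_of_mul_le_mul_left this h0

lemma aux_sum_norm_le {A : Type*} [NonUnitalNormedRing A] [StarRing A] [CStarRing A]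
    (s : Finset ℕ) (a : ℕ → A) (hsa : ∀ i ∈ s, IsSelfAdjoint (a i))
    (horth : ∀ i ∈ s, ∀ j ∈ s, i ≠ j → a i * a j = 0)
    {M : ℝ} (hM0 : 0 ≤ M) (hM : ∀ i ∈ s, ‖a i‖ ≤ M) :
    ‖∑ i ∈ s, a i‖ ≤ M := by
  have main : ∀ k : ℕ, ∃ b : ℕ → A,
      (∀ i ∈ s, IsSelfAdjoint (b i)) ∧
      (∀ i ∈ s, ∀ j ∈ s, i ≠ j → b i * b j = 0) ∧
      (∀ i ∈ s, ‖b i‖ = ‖a i‖ ^ (2 ^ k)) ∧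
      ‖∑ i ∈ s, b i‖ = ‖∑ i ∈ s, a i‖ ^ (2 ^ k) := by
    intro k
    induction k with
    | zero => exact ⟨a, hsa, horth, fun i _ => by simp, by simp⟩
    | succ k ih =>
      obtain ⟨b, hb1, hb2, hb3, hb4⟩ := ih
      refine ⟨fun i => b i * b i, ?_, ?_, ?_, ?_⟩
      · intro i hi
        rw [IsSelfAdjoint, star_mul, (hb1 i hi).star_eq]
      · intro i hi j hj hne
        have : b i * b j = 0 := hb2 i hi j hj hne
        calc b i * b i * (b j * b j) = b i * (b i * b j) * b j := by noncomm_ring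
          _ = 0 := by rw [this]; simp
      · intro i hi
        have : ‖b i * b i‖ = ‖b i‖ * ‖b i‖ := by
          nth_rewrite 1 [← (hb1 i hi).star_eq]
          rw [CStarRing.norm_star_mul_self]
        rw [this, hb3 i hi, pow_succ, pow_mul, sq]
      · have hsum : ∑ i ∈ s, b i * b i = (∑ i ∈ s, b i) * (∑ j ∈ s, b j) := by
          rw [Finset.sum_mul_sum]
          refine Finset.sum_congr rfl fun i hi => ?_
          exact (Finset.sum_eq_single i (fun j hj hne => hb2 i hi j hj (Ne.symm hne)) (fun h => absurd hi h)).symm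
        have hS : IsSelfAdjoint (∑ i ∈ s, b i) := by
          rw [IsSelfAdjoint, star_sum]
          exact Finset.sum_congr rfl fun i hi => (hb1 i hi).star_eq
        have : ‖(∑ i ∈ s, b i) * (∑ j ∈ s, b j)‖ = ‖∑ i ∈ s, b i‖ * ‖∑ i ∈ s, b i‖ := by
          nth_rewrite 1 [← hS.star_eq]
          rw [CStarRing.norm_star_mul_self]
        rw [hsum, this, hb4, pow_succ, pow_mul, sq]
  have key : ∀ k : ℕ, ‖∑ i ∈ s, a i‖ ^ (2 ^ k) ≤ (s.card : ℝ) * M ^ (2 ^ k) := by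
    intro k
    obtain ⟨b, hb1, hb2, hb3, hb4⟩ := main k
    calc ‖∑ i ∈ s, a i‖ ^ (2 ^ k) = ‖∑ i ∈ s, b i‖ := hb4.symm
      _ ≤ ∑ i ∈ s, ‖b i‖ := norm_sum_le _ _
      _ ≤ ∑ _i ∈ s, M ^ (2 ^ k) := by
          refine Finset.sum_le_sum fun i hi => ?_
          rw [hb3 i hi]
          exact pow_le_pow_left₀ (norm_nonneg _) (hM i hi) _
      _ = (s.card : ℝ) * M ^ (2 ^ k) := by rw [Finset.sum_const, nsmul_eq_mul]
  by_contra hlt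
  push_neg at hlt
  have hMpos : 0 < M ∨ M = 0 := lt_or_eq_of_le hM0 |>.imp id Eq.symm
  rcases hMpos with hMpos | rfl
  · set r : ℝ := ‖∑ i ∈ s, a i‖ / M with hr
    have hr1 : 1 < r := (one_lt_div hMpos).mpr hlt
    obtain ⟨n, hn⟩ := pow_unbounded_of_one_lt (s.card : ℝ) hr1
    have h1 : r ^ (2 ^ n) ≤ (s.card : ℝ) := by
      have := key n
      rw [hr, div_pow, div_le_iff₀ (by positivity)]
      exact this
    have h2 : r ^ n ≤ r ^ (2 ^ n) :=
      pow_le_pow_right₀ hr1.le (Nat.lt_two_pow_self (n := n)).le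
    linarith
  · have : ∀ i ∈ s, a i = 0 := fun i hi => norm_le_zero_iff.mp (hM i hi)
    rw [Finset.sum_eq_zero this] at hlt
    simp at hlt
lemma aux_exists_max (f : ℕ → ℝ) (hf0 : ∀ n, 0 ≤ f n)
    (hf : Filter.Tendsto f Filter.atTop (nhds 0)) : ∃ n₀, ∀ n, f n ≤ f n₀ := by
  by_cases h : ∀ n, f n = 0
  · exact ⟨0, fun n => by rw [h n, h 0]⟩
  · push_neg at h
    obtain ⟨m, hm⟩ := h
    have hmpos : 0 < f m := lt_of_le_of_ne (hf0 m) (Ne.symm hm)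
    obtain ⟨K, hK⟩ := (Metric.tendsto_atTop.mp hf) (f m) hmpos
    have hK' : ∀ n ≥ K, f n < f m := by
      intro n hn
      have := hK n hn
      rwa [Real.dist_eq, sub_zero, abs_of_nonneg (hf0 n)] at this
    obtain ⟨b, hb, hbmax⟩ := (Finset.range K ∪ {m}).exists_max_image f
      ⟨m, Finset.mem_union_right _ (Finset.mem_singleton_self m)⟩
    refine ⟨b, fun n => ?_⟩
    by_cases hn : n ∈ Finset.range K ∪ {m}
    · exact hbmax n hn
    · have hnK : K ≤ n := by
        by_contra hc
        exact hn (Finset.mem_union_left _ (Finset.mem_range.mpr (not_le.mp hc)))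
      exact ((hK' n hnK).le).trans (hbmax m (Finset.mem_union_right _ (Finset.mem_singleton_self m)))

open Filter


theorem stmt_19 {A : Type*} [NonUnitalNormedRing A] [StarRing A] [CStarRing A]
    [CompleteSpace A] (a : ℕ → A) (hsa : ∀ n, IsSelfAdjoint (a n))
    (horth : ∀ n m, n ≠ m → a n * a m = 0)
    (hnorm : Tendsto (fun n => ‖a n‖) atTop (nhds 0)) :
    ∃ s : ℕ → A,
      (∀ N, Tendsto (fun M => ∑ n ∈ Finset.Ico N M, a n) atTop (nhds (s N))) ∧
      (∀ N, ‖s N‖ = ⨆ n : ℕ, ‖a (N + n)‖) ∧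
      ‖s 0‖ = ⨆ n : ℕ, ‖a n‖ := by
  have hsa' : ∀ (t : Finset ℕ), ∀ i ∈ t, IsSelfAdjoint (a i) := fun _ i _ => hsa i
  have horth' : ∀ (t : Finset ℕ), ∀ i ∈ t, ∀ j ∈ t, i ≠ j → a i * a j = 0 :=
    fun _ i _ j _ h => horth i j h
  -- convergence
  have hconv : ∀ N : ℕ, ∃ l : A, Tendsto (fun M => ∑ n ∈ Finset.Ico N M, a n) atTop (nhds l) := by
    intro N
    apply cauchySeq_tendsto_of_complete
    rw [Metric.cauchySeq_iff']
    intro ε hε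
    obtain ⟨K0, hK0⟩ := (Metric.tendsto_atTop.mp hnorm) (ε / 2) (by positivity)
    refine ⟨max N K0, fun m hm => ?_⟩
    have hNK : N ≤ max N K0 := le_max_left _ _
    have hsplit : ∑ n ∈ Finset.Ico N (max N K0), a n + ∑ n ∈ Finset.Ico (max N K0) m, a n
        = ∑ n ∈ Finset.Ico N m, a n :=
      Finset.sum_Ico_consecutive _ hNK hm
    have hdist : dist (∑ n ∈ Finset.Ico N m, a n) (∑ n ∈ Finset.Ico N (max N K0), a n)
        = ‖∑ n ∈ Finset.Ico (max N K0) m, a n‖ := by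
      rw [dist_eq_norm, ← hsplit]
      congr 1
      abel
    rw [hdist]
    have hle : ‖∑ n ∈ Finset.Ico (max N K0) m, a n‖ ≤ ε / 2 := by
      apply aux_sum_norm_le _ a (hsa' _) (horth' _) (by positivity)
      intro i hi
      have hiK : K0 ≤ i := le_trans (le_max_right _ _) (Finset.mem_Ico.mp hi).1
      have := hK0 i hiK
      rw [Real.dist_eq, sub_zero, abs_of_nonneg (norm_nonneg _)] at this
      exact this.le
    linarith
  choose s hs using hconv
  have hnormN : ∀ N, ‖s N‖ = ⨆ n : ℕ, ‖a (N + n)‖ := by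
    intro N
    set f : ℕ → ℝ := fun n => ‖a (N + n)‖ with hf_def
    have hftend : Tendsto f atTop (nhds 0) :=
      hnorm.comp (tendsto_atTop_mono (fun n => Nat.le_add_left n N) tendsto_id)
    obtain ⟨n₀, hn₀⟩ := aux_exists_max f (fun n => norm_nonneg _) hftend
    have hsup : (⨆ n : ℕ, ‖a (N + n)‖) = f n₀ := by
      refine le_antisymm (ciSup_le fun n => hn₀ n) ?_
      exact le_ciSup ⟨f n₀, fun x ⟨n, hn⟩ => hn ▸ hn₀ n⟩ n₀
    rw [hsup]
    have heq : ∀ M ≥ N + n₀ + 1, ‖∑ n ∈ Finset.Ico N M, a n‖ = f n₀ := by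
      intro M hM
      refine le_antisymm ?_ ?_
      · apply aux_sum_norm_le _ a (hsa' _) (horth' _) (norm_nonneg _)
        intro i hi
        have h1 : N ≤ i := (Finset.mem_Ico.mp hi).1
        have : a i = a (N + (i - N)) := by rw [Nat.add_sub_cancel' h1]
        rw [this]
        exact hn₀ (i - N)
      · have hmem : N + n₀ ∈ Finset.Ico N M :=
          Finset.mem_Ico.mpr ⟨Nat.le_add_right _ _, Nat.lt_of_succ_le hM⟩
        exact aux_le_sum_norm _ a (hsa' _) (horth' _) hmem
    have h1 : Tendsto (fun M => ‖∑ n ∈ Finset.Ico N M, a n‖) atTop (nhds ‖s N‖) :=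
      (hs N).norm
    have h2 : Tendsto (fun M => ‖∑ n ∈ Finset.Ico N M, a n‖) atTop (nhds (f n₀)) := by
      refine Tendsto.congr' ?_
        (tendsto_const_nhds : Tendsto (fun _ : ℕ => f n₀) atTop (nhds (f n₀)))
      filter_upwards [eventually_ge_atTop (N + n₀ + 1)] with M hM
      exact (heq M hM).symm
    exact tendsto_nhds_unique h1 h2
  refine ⟨s, hs, hnormN, ?_⟩
  rw [hnormN 0]
  simp
end
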